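/- For real λ with λ₁ > λ₀ and with ∫_{x₀}^{x₁} q > 0, one has ξ(λ₁) < ξ(λ₀); equivalently, if Re(λ₁) > λ₀ for complex λ₁ then Re(ξ(λ₁)) < ξ(λ₀), so ξ(λ₁) ≠ 0 when ξ(λ₀) = 0. -/

import Mathlib

open MeasureTheory Set

/-- The characteristic function restricted to real `λ`. -/
noncomputable def xiR (x₀ x₁ : ℝ) (g w q : ℝ → ℝ) (l : ℝ) : ℝ :=
  (∫ x in x₀..x₁, q x / g x * Real.exp (-∫ s in x₀..x, (l + w s) / g s)) - 1

/-- The characteristic function for complex `λ`. -/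
noncomputable def xiC (x₀ x₁ : ℝ) (g w q : ℝ → ℝ) (l : ℂ) : ℂ :=
  (∫ x in x₀..x₁, ((q x / g x : ℝ) : ℂ) *
      Complex.exp (-∫ s in x₀..x, (l + (w s : ℂ)) / (g s : ℂ))) - 1

section Aux

variable {x₀ x₁ Mq : ℝ} {g w q : ℝ → ℝ}

/-- Continuity of the inner primitive. -/
lemma aux_contA (hx : x₀ ≤ x₁) (hg : ContinuousOn g (Icc x₀ x₁))
    (hgpos : ∀ x ∈ Icc x₀ x₁, 0 < g x) (hw : ContinuousOn w (Icc x₀ x₁)) (r : ℝ) :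
    ContinuousOn (fun x => ∫ s in x₀..x, (r + w s) / g s) (Icc x₀ x₁) := by
  have hc : ContinuousOn (fun s => (r + w s) / g s) (Icc x₀ x₁) :=
    (continuousOn_const.add hw).div hg (fun x hx => (hgpos x hx).ne')
  have h := intervalIntegral.continuousOn_primitive_interval
    (f := fun s => (r + w s) / g s) (μ := volume) (a := x₀) (b := x₁)
    (by rw [uIcc_of_le hx]; exact hc.integrableOn_Icc)
  rwa [uIcc_of_le hx] at h

/-- Strict monotonicity of the inner primitive in `r`, for `x > x₀`. -/
lemma aux_Alt (hg : ContinuousOn g (Icc x₀ x₁))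
    (hgpos : ∀ x ∈ Icc x₀ x₁, 0 < g x) (hw : ContinuousOn w (Icc x₀ x₁))
    {r₀ r₁ : ℝ} (hr : r₀ < r₁) {x : ℝ} (hxm : x ∈ Ioc x₀ x₁) :
    (∫ s in x₀..x, (r₀ + w s) / g s) < ∫ s in x₀..x, (r₁ + w s) / g s := by
  have hsub : Icc x₀ x ⊆ Icc x₀ x₁ := Icc_subset_Icc le_rfl hxm.2
  have hint : ∀ r : ℝ, IntervalIntegrable (fun s => (r + w s) / g s) volume x₀ x := by
    intro r
    apply ContinuousOn.intervalIntegrable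
    rw [uIcc_of_le hxm.1.le]
    exact (continuousOn_const.add (hw.mono hsub)).div (hg.mono hsub)
      (fun y hy => (hgpos y (hsub hy)).ne')
  rw [← sub_pos, ← intervalIntegral.integral_sub (hint r₁) (hint r₀)]
  have heq : ∀ s : ℝ, (r₁ + w s) / g s - (r₀ + w s) / g s = (r₁ - r₀) / g s := by
    intro s; rw [div_sub_div_same, add_sub_add_right_eq_sub]
  simp only [heq]
  apply intervalIntegral.intervalIntegral_pos_of_pos_on
  · apply ContinuousOn.intervalIntegrable
    rw [uIcc_of_le hxm.1.le]
    exact continuousOn_const.div (hg.mono hsub) (fun y hy => (hgpos y (hsub hy)).ne')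
  · intro s hs
    exact div_pos (sub_pos.2 hr) (hgpos s (hsub ⟨hs.1.le, hs.2.le⟩))
  · exact hxm.1

/-- Integrability of the (real) integrand of `ξ`. -/
lemma aux_intF (hx : x₀ ≤ x₁) (hg : ContinuousOn g (Icc x₀ x₁))
    (hgpos : ∀ x ∈ Icc x₀ x₁, 0 < g x) (hw : ContinuousOn w (Icc x₀ x₁))
    (hqm : Measurable q) (hqb : ∀ x ∈ Icc x₀ x₁, |q x| ≤ Mq) (r : ℝ) :
    IntegrableOn (fun x => q x / g x * Real.exp (-∫ s in x₀..x, (r + w s) / g s))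
      (Ioc x₀ x₁) := by
  have hA := aux_contA hx hg hgpos hw r
  have hG : ContinuousOn (fun x => Real.exp (-∫ s in x₀..x, (r + w s) / g s) / g x)
      (Icc x₀ x₁) :=
    (Real.continuous_exp.comp_continuousOn hA.neg).div hg (fun y hy => (hgpos y hy).ne')
  obtain ⟨C, hC⟩ := isCompact_Icc.exists_bound_of_continuousOn hG
  have hsm : AEStronglyMeasurable
      (fun x => q x * (Real.exp (-∫ s in x₀..x, (r + w s) / g s) / g x))
      (volume.restrict (Ioc x₀ x₁)) :=
    hqm.aestronglyMeasurable.mul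
      ((hG.aestronglyMeasurable measurableSet_Icc).mono_measure
        (Measure.restrict_mono Ioc_subset_Icc_self le_rfl))
  have hI : IntegrableOn
      (fun x => q x * (Real.exp (-∫ s in x₀..x, (r + w s) / g s) / g x)) (Ioc x₀ x₁) := by
    apply Integrable.mono' (integrable_const (Mq * C)) hsm
    filter_upwards [ae_restrict_mem measurableSet_Ioc] with x hxm
    have hxI : x ∈ Icc x₀ x₁ := Ioc_subset_Icc_self hxm
    have h1 : |q x| ≤ Mq := hqb x hxI
    have h2 := hC x hxI
    calc ‖q x * (Real.exp (-∫ s in x₀..x, (r + w s) / g s) / g x)‖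
        = |q x| * ‖Real.exp (-∫ s in x₀..x, (r + w s) / g s) / g x‖ := by
          rw [norm_mul, Real.norm_eq_abs]
      _ ≤ Mq * C := mul_le_mul h1 h2 (norm_nonneg _) ((abs_nonneg _).trans h1)
  have : (fun x => q x / g x * Real.exp (-∫ s in x₀..x, (r + w s) / g s))
      = fun x => q x * (Real.exp (-∫ s in x₀..x, (r + w s) / g s) / g x) := by
    funext x; ring
  rw [this]
  exact hI

/-- Strict monotonicity of the real integral in `r`. -/
lemma aux_strict (hx : x₀ < x₁) (hg : ContinuousOn g (Icc x₀ x₁))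
    (hgpos : ∀ x ∈ Icc x₀ x₁, 0 < g x) (hw : ContinuousOn w (Icc x₀ x₁))
    (hqm : Measurable q) (hqb : ∀ x ∈ Icc x₀ x₁, |q x| ≤ Mq)
    (hq0 : ∀ᵐ x ∂(volume.restrict (Icc x₀ x₁)), 0 ≤ q x)
    (hqpos : 0 < ∫ x in x₀..x₁, q x) {r₀ r₁ : ℝ} (hr : r₀ < r₁) :
    (∫ x in x₀..x₁, q x / g x * Real.exp (-∫ s in x₀..x, (r₁ + w s) / g s))
      < ∫ x in x₀..x₁, q x / g x * Real.exp (-∫ s in x₀..x, (r₀ + w s) / g s) := by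
  have hint : ∀ r : ℝ, IntegrableOn
      (fun x => q x / g x * Real.exp (-∫ s in x₀..x, (r + w s) / g s)) (Ioc x₀ x₁) :=
    fun r => aux_intF hx.le hg hgpos hw hqm hqb r
  have hq0' : ∀ᵐ x ∂(volume.restrict (Ioc x₀ x₁)), 0 ≤ q x :=
    ae_restrict_of_ae_restrict_of_subset Ioc_subset_Icc_self hq0
  have hd0 : ∀ᵐ x ∂(volume.restrict (Ioc x₀ x₁)), 0 ≤
      q x / g x * Real.exp (-∫ s in x₀..x, (r₀ + w s) / g s)
        - q x / g x * Real.exp (-∫ s in x₀..x, (r₁ + w s) / g s) := by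
    filter_upwards [hq0', ae_restrict_mem measurableSet_Ioc] with x hq hxm
    have hxI : x ∈ Icc x₀ x₁ := Ioc_subset_Icc_self hxm
    have hA := (aux_Alt hg hgpos hw hr hxm).le
    have hqg : 0 ≤ q x / g x := div_nonneg hq (hgpos x hxI).le
    have hE : Real.exp (-∫ s in x₀..x, (r₁ + w s) / g s)
        ≤ Real.exp (-∫ s in x₀..x, (r₀ + w s) / g s) :=
      Real.exp_le_exp.2 (neg_le_neg hA)
    have := mul_le_mul_of_nonneg_left hE hqg
    linarith
  have hdint : Integrable
      (fun x => q x / g x * Real.exp (-∫ s in x₀..x, (r₀ + w s) / g s)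
        - q x / g x * Real.exp (-∫ s in x₀..x, (r₁ + w s) / g s))
      (volume.restrict (Ioc x₀ x₁)) := (hint r₀).sub (hint r₁)
  have hdpos : 0 < ∫ x in Ioc x₀ x₁,
      (q x / g x * Real.exp (-∫ s in x₀..x, (r₀ + w s) / g s)
        - q x / g x * Real.exp (-∫ s in x₀..x, (r₁ + w s) / g s)) := by
    rcases lt_or_eq_of_le (integral_nonneg_of_ae hd0) with h | h
    · exact h
    · exfalso
      have hz := (integral_eq_zero_iff_of_nonneg_ae hd0 hdint).1 h.symm
      have hq0'' : q =ᵐ[volume.restrict (Ioc x₀ x₁)] 0 := by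
        filter_upwards [hz, ae_restrict_mem measurableSet_Ioc] with x hdx hxm
        have hxI : x ∈ Icc x₀ x₁ := Ioc_subset_Icc_self hxm
        have hE : Real.exp (-∫ s in x₀..x, (r₁ + w s) / g s)
            < Real.exp (-∫ s in x₀..x, (r₀ + w s) / g s) :=
          Real.exp_lt_exp.2 (neg_lt_neg (aux_Alt hg hgpos hw hr hxm))
        simp only [Pi.zero_apply] at hdx ⊢
        have h2 : q x / g x * (Real.exp (-∫ s in x₀..x, (r₀ + w s) / g s)
            - Real.exp (-∫ s in x₀..x, (r₁ + w s) / g s)) = 0 := by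
          rw [mul_sub]; exact hdx
        rcases mul_eq_zero.1 h2 with h3 | h3
        · rcases div_eq_zero_iff.1 h3 with h4 | h4
          · exact h4
          · exact absurd h4 (hgpos x hxI).ne'
        · linarith
      have hq0int : (∫ x in x₀..x₁, q x) = 0 := by
        rw [intervalIntegral.integral_of_le hx.le]
        exact integral_eq_zero_of_ae hq0''
      linarith
  have hsub : (∫ x in Ioc x₀ x₁,
      (q x / g x * Real.exp (-∫ s in x₀..x, (r₀ + w s) / g s)
        - q x / g x * Real.exp (-∫ s in x₀..x, (r₁ + w s) / g s)))
      = (∫ x in Ioc x₀ x₁, q x / g x * Real.exp (-∫ s in x₀..x, (r₀ + w s) / g s))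
        - ∫ x in Ioc x₀ x₁, q x / g x * Real.exp (-∫ s in x₀..x, (r₁ + w s) / g s) :=
    integral_sub (hint r₀) (hint r₁)
  rw [intervalIntegral.integral_of_le hx.le, intervalIntegral.integral_of_le hx.le]
  rw [hsub] at hdpos
  linarith

/-- The real part of the complex `ξ` is bounded by the real `ξ` at the real part. -/
lemma aux_complex (hx : x₀ < x₁) (hg : ContinuousOn g (Icc x₀ x₁))
    (hgpos : ∀ x ∈ Icc x₀ x₁, 0 < g x) (hw : ContinuousOn w (Icc x₀ x₁))
    (hqm : Measurable q) (hqb : ∀ x ∈ Icc x₀ x₁, |q x| ≤ Mq)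
    (hq0 : ∀ᵐ x ∂(volume.restrict (Icc x₀ x₁)), 0 ≤ q x) (l : ℂ) :
    (xiC x₀ x₁ g w q l).re ≤ xiR x₀ x₁ g w q l.re := by
  have hgC : ContinuousOn (fun s => ((g s : ℂ))) (Icc x₀ x₁) :=
    Complex.continuous_ofReal.comp_continuousOn hg
  have hgne : ∀ y ∈ Icc x₀ x₁, ((g y : ℂ)) ≠ 0 := fun y hy => by
    exact_mod_cast (hgpos y hy).ne'
  have hcI : ContinuousOn (fun s => (l + (w s : ℂ)) / (g s : ℂ)) (Icc x₀ x₁) :=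
    (continuousOn_const.add (Complex.continuous_ofReal.comp_continuousOn hw)).div hgC hgne
  have hBcont : ContinuousOn (fun x => ∫ s in x₀..x, (l + (w s : ℂ)) / (g s : ℂ))
      (Icc x₀ x₁) := by
    have h := intervalIntegral.continuousOn_primitive_interval
      (f := fun s => (l + (w s : ℂ)) / (g s : ℂ)) (μ := volume) (a := x₀) (b := x₁)
      (by rw [uIcc_of_le hx.le]; exact hcI.integrableOn_Icc)
    rwa [uIcc_of_le hx.le] at h
  -- real part of the inner complex primitive
  have hBre : ∀ x ∈ Icc x₀ x₁, (∫ s in x₀..x, (l + (w s : ℂ)) / (g s : ℂ)).re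
      = ∫ s in x₀..x, (l.re + w s) / g s := by
    intro x hxm
    have hsub : Icc x₀ x ⊆ Icc x₀ x₁ := Icc_subset_Icc le_rfl hxm.2
    have hI : IntegrableOn (fun s => (l + (w s : ℂ)) / (g s : ℂ)) (Ioc x₀ x) :=
      ((hcI.mono hsub).integrableOn_Icc).mono_set Ioc_subset_Icc_self
    rw [intervalIntegral.integral_of_le hxm.1, intervalIntegral.integral_of_le hxm.1,
      ← RCLike.re_to_complex, ← integral_re hI]
    apply setIntegral_congr_fun measurableSet_Ioc
    intro s _
    simp [Complex.div_ofReal_re]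
  -- the complex integrand
  set G : ℝ → ℂ := fun x => ((q x / g x : ℝ) : ℂ) *
      Complex.exp (-∫ s in x₀..x, (l + (w s : ℂ)) / (g s : ℂ)) with hGdef
  have hH : ContinuousOn
      (fun x => Complex.exp (-∫ s in x₀..x, (l + (w s : ℂ)) / (g s : ℂ)) / (g x : ℂ))
      (Icc x₀ x₁) := (Complex.continuous_exp.comp_continuousOn hBcont.neg).div hgC hgne
  obtain ⟨C, hC⟩ := isCompact_Icc.exists_bound_of_continuousOn hH
  have hGeq : G = fun x => ((q x : ℝ) : ℂ) *
      (Complex.exp (-∫ s in x₀..x, (l + (w s : ℂ)) / (g s : ℂ)) / (g x : ℂ)) := by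
    funext x
    simp only [hGdef]
    push_cast
    ring
  have hGint : IntegrableOn G (Ioc x₀ x₁) := by
    rw [hGeq]
    apply Integrable.mono' (integrable_const (Mq * C))
    · exact (Complex.measurable_ofReal.comp hqm).aestronglyMeasurable.mul
        ((hH.aestronglyMeasurable measurableSet_Icc).mono_measure
          (Measure.restrict_mono Ioc_subset_Icc_self le_rfl))
    · filter_upwards [ae_restrict_mem measurableSet_Ioc] with x hxm
      have hxI : x ∈ Icc x₀ x₁ := Ioc_subset_Icc_self hxm
      have h1 : |q x| ≤ Mq := hqb x hxI
      calc ‖((q x : ℝ) : ℂ) * (Complex.exp (-∫ s in x₀..x, (l + (w s : ℂ)) / (g s : ℂ)) / (g x : ℂ))‖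
          = |q x| * ‖Complex.exp (-∫ s in x₀..x, (l + (w s : ℂ)) / (g s : ℂ)) / (g x : ℂ)‖ := by
            rw [norm_mul, Complex.norm_real, Real.norm_eq_abs]
        _ ≤ Mq * C := mul_le_mul h1 (hC x hxI) (norm_nonneg _) ((abs_nonneg _).trans h1)
  have hq0' : ∀ᵐ x ∂(volume.restrict (Ioc x₀ x₁)), 0 ≤ q x :=
    ae_restrict_of_ae_restrict_of_subset Ioc_subset_Icc_self hq0
  have hFint : IntegrableOn
      (fun x => q x / g x * Real.exp (-∫ s in x₀..x, (l.re + w s) / g s)) (Ioc x₀ x₁) :=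
    aux_intF hx.le hg hgpos hw hqm hqb l.re
  -- pointwise bound of real parts
  have hbound : ∀ᵐ x ∂(volume.restrict (Ioc x₀ x₁)),
      (G x).re ≤ q x / g x * Real.exp (-∫ s in x₀..x, (l.re + w s) / g s) := by
    filter_upwards [hq0', ae_restrict_mem measurableSet_Ioc] with x hq hxm
    have hxI : x ∈ Icc x₀ x₁ := Ioc_subset_Icc_self hxm
    have hqg : 0 ≤ q x / g x := div_nonneg hq (hgpos x hxI).le
    calc (G x).re ≤ ‖G x‖ := Complex.re_le_norm _
      _ = |q x / g x| * ‖Complex.exp (-∫ s in x₀..x, (l + (w s : ℂ)) / (g s : ℂ))‖ := by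
          rw [hGdef]; simp [map_mul, Complex.norm_real, abs_div]
      _ = q x / g x * Real.exp (-∫ s in x₀..x, (l.re + w s) / g s) := by
          rw [abs_of_nonneg hqg, Complex.norm_exp, Complex.neg_re, hBre x hxI]
  have hre : (∫ x in Ioc x₀ x₁, G x).re = ∫ x in Ioc x₀ x₁, (G x).re := by
    rw [← RCLike.re_to_complex, ← integral_re hGint]
    rfl
  have hGre_int : Integrable (fun x => (G x).re) (volume.restrict (Ioc x₀ x₁)) := hGint.re
  have key : (∫ x in Ioc x₀ x₁, G x).re
      ≤ ∫ x in Ioc x₀ x₁, q x / g x * Real.exp (-∫ s in x₀..x, (l.re + w s) / g s) := by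
    rw [hre]
    exact integral_mono_ae hGre_int hFint hbound
  simp only [xiC, xiR, Complex.sub_re, Complex.one_re]
  rw [intervalIntegral.integral_of_le hx.le, intervalIntegral.integral_of_le hx.le]
  have : (∫ x in Ioc x₀ x₁, ((q x / g x : ℝ) : ℂ) *
      Complex.exp (-∫ s in x₀..x, (l + (w s : ℂ)) / (g s : ℂ))) = ∫ x in Ioc x₀ x₁, G x := rfl
  rw [this]
  linarith [key]

end Aux

/-- If `λ₀ < λ₁` (real) then `ξ(λ₁) < ξ(λ₀)`; if `λ₀ < Re λ₁` (complex) then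
`Re ξ(λ₁) < ξ(λ₀)`, so `ξ(λ₁) ≠ 0` when `ξ(λ₀) = 0`. -/
theorem stmt_14 (x₀ x₁ Mq : ℝ) (hx₀ : 0 < x₀) (hx : x₀ < x₁)
    (g w q : ℝ → ℝ)
    (hg : ContDiffOn ℝ 1 g (Icc x₀ x₁)) (hgpos : ∀ x ∈ Icc x₀ x₁, 0 < g x)
    (hw : ContinuousOn w (Icc x₀ x₁)) (hw0 : ∀ x ∈ Icc x₀ x₁, 0 ≤ w x)
    (hqm : Measurable q) (hqb : ∀ x ∈ Icc x₀ x₁, |q x| ≤ Mq)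
    (hq0 : ∀ᵐ x ∂(volume.restrict (Icc x₀ x₁)), 0 ≤ q x)
    (hqpos : 0 < ∫ x in x₀..x₁, q x) (l₀ : ℝ) :
    (∀ l₁ : ℝ, l₀ < l₁ → xiR x₀ x₁ g w q l₁ < xiR x₀ x₁ g w q l₀) ∧
    (∀ l₁ : ℂ, l₀ < l₁.re → (xiC x₀ x₁ g w q l₁).re < xiR x₀ x₁ g w q l₀) ∧
    (∀ l₁ : ℂ, l₀ < l₁.re → xiR x₀ x₁ g w q l₀ = 0 → xiC x₀ x₁ g w q l₁ ≠ 0) := by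
  have hgc : ContinuousOn g (Icc x₀ x₁) := hg.continuousOn
  have part1 : ∀ l₁ : ℝ, l₀ < l₁ → xiR x₀ x₁ g w q l₁ < xiR x₀ x₁ g w q l₀ := by
    intro l₁ h
    simp only [xiR]
    have := aux_strict hx hgc hgpos hw hqm hqb hq0 hqpos h
    linarith
  have part2 : ∀ l₁ : ℂ, l₀ < l₁.re → (xiC x₀ x₁ g w q l₁).re < xiR x₀ x₁ g w q l₀ := by
    intro l₁ h
    exact lt_of_le_of_lt (aux_complex hx hgc hgpos hw hqm hqb hq0 l₁) (part1 l₁.re h)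
  refine ⟨part1, part2, ?_⟩
  intro l₁ h h0 heq
  have := part2 l₁ h
  rw [h0, heq] at this
  simp at this
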